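/- arXiv:1105.0437 — 2 statements merged into one kernel-verified Lean document; each statement's English description precedes it below -/
import Mathlib

section
/- Let A be an n×n complex matrix (n ≥ 1) all of whose eigenvalues are real and strictly greater than −1, let ρ = ρ(A) be its spectral radius and λ_min its smallest eigenvalue. Then det(I + A) is a positive real number, the trace t of A is real, and exp(t − n ρ²/(1 + λ_min)) ≤ det(I + A) ≤ exp(t). -/
open Matrix

open Polynomial


-- helper lemmas
lemma msum_exp (t : Multiset ℝ) : (t.map Real.exp).prod = Real.exp t.sum := by
  induction t using Multiset.induction with
  | empty => simp
  | cons a s ih => simp [ih, Real.exp_add]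

lemma mprod_le (t : Multiset ℝ) (f g : ℝ → ℝ) (h0 : ∀ x ∈ t, 0 ≤ f x)
    (h : ∀ x ∈ t, f x ≤ g x) : (t.map f).prod ≤ (t.map g).prod := by
  induction t using Multiset.induction with
  | empty => simp
  | cons a s ih =>
      simp only [Multiset.map_cons, Multiset.prod_cons]
      have hf : ∀ x ∈ s, 0 ≤ f x := fun x hx => h0 x (Multiset.mem_cons_of_mem hx)
      have hprod : 0 ≤ (s.map f).prod := Multiset.prod_nonneg (by
        intro x hx; obtain ⟨y, hy, rfl⟩ := Multiset.mem_map.mp hx; exact hf y hy)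
      have := ih hf (fun x hx => h x (Multiset.mem_cons_of_mem hx))
      calc f a * (s.map f).prod ≤ g a * (s.map f).prod := by
            apply mul_le_mul_of_nonneg_right (h a (Multiset.mem_cons_self a s)) hprod
        _ ≤ g a * (s.map g).prod := by
            apply mul_le_mul_of_nonneg_left this
            exact le_trans (h0 a (Multiset.mem_cons_self a s)) (h a (Multiset.mem_cons_self a s))

lemma mprod_pos (t : Multiset ℝ) (h : ∀ x ∈ t, 0 < x) : 0 < t.prod := by
  induction t using Multiset.induction with
  | empty => simp
  | cons a s ih =>
      simp only [Multiset.prod_cons]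
      exact mul_pos (h a (Multiset.mem_cons_self a s))
        (ih (fun x hx => h x (Multiset.mem_cons_of_mem hx)))

lemma msum_sub (t : Multiset ℝ) (c : ℝ) :
    (t.map (fun x => x - c)).sum = t.sum - (Multiset.card t : ℝ) * c := by
  induction t using Multiset.induction with
  | empty => simp
  | cons a s ih => simp [ih]; ring

-- key scalar inequality: for -1 < x, |x| ≤ ρ, -1 < lmin ≤ x :
-- exp (x - ρ^2/(1+lmin)) ≤ 1 + x
lemma key_ineq (x ρ lmin : ℝ) (hx : -1 < x) (hxρ : |x| ≤ ρ) (hl : -1 < lmin)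
    (hlx : lmin ≤ x) : Real.exp (x - ρ ^ 2 / (1 + lmin)) ≤ 1 + x := by
  have h1x : (0:ℝ) < 1 + x := by linarith
  have h1l : (0:ℝ) < 1 + lmin := by linarith
  set y := x / (1 + x) with hy
  have hexp : Real.exp y ≤ 1 + x := by
    have h := Real.add_one_le_exp (-y)
    have h2 : 1 / (1 + x) ≤ Real.exp (-y) := by
      have : -y + 1 = 1 / (1 + x) := by rw [hy]; field_simp; ring
      linarith [h, this]
    have h3 : Real.exp y = 1 / Real.exp (-y) := by
      rw [Real.exp_neg]; field_simp
    rw [h3]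
    calc 1 / Real.exp (-y) ≤ 1 / (1 / (1 + x)) :=
          one_div_le_one_div_of_le (by positivity) h2
      _ = 1 + x := by field_simp
  have harg : x - ρ ^ 2 / (1 + lmin) ≤ y := by
    have hxx : x ^ 2 ≤ ρ ^ 2 := by
      calc x ^ 2 = |x| ^ 2 := (sq_abs x).symm
        _ ≤ ρ ^ 2 := pow_le_pow_left₀ (abs_nonneg x) hxρ 2
    have hdiv : x ^ 2 / (1 + x) ≤ ρ ^ 2 / (1 + lmin) := by
      apply div_le_div₀ (by positivity) hxx h1l (by linarith)
    have : x - x ^ 2 / (1 + x) = y := by rw [hy]; field_simp; ring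
    linarith
  exact le_trans (Real.exp_le_exp.mpr harg) hexp

lemma det_one_add (n : ℕ) (A : Matrix (Fin n) (Fin n) ℂ) :
    (1 + A).det = (A.charpoly.roots.map (fun μ => 1 + μ)).prod := by
  have hsp : A.charpoly.Splits := IsAlgClosed.splits A.charpoly
  have hcard : Multiset.card A.charpoly.roots = n := by
    rw [(Polynomial.splits_iff_card_roots).mp hsp, Matrix.charpoly_natDegree_eq_dim,
      Fintype.card_fin]
  have heval : A.charpoly.eval (-1) = ((-1 : ℂ) • (1 : Matrix (Fin n) (Fin n) ℂ) - A).det := by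
    rw [Matrix.charpoly, eval_det, Matrix.matPolyEquiv_charmatrix]
    simp only [eval_sub, eval_X, eval_C, Matrix.scalar_apply]
    congr 1
    rw [Matrix.smul_eq_diagonal_mul]
    simp [Matrix.diagonal_neg]
  have hneg : ((-1 : ℂ) • (1 : Matrix (Fin n) (Fin n) ℂ) - A) = -(1 + A) := by
    rw [neg_one_smul]; abel
  have hpm := hsp.eq_prod_roots_of_monic (Matrix.charpoly_monic A)
  set r := A.charpoly.roots with hr
  have h3 : A.charpoly.eval (-1) = (-1 : ℂ) ^ n * (r.map (fun μ => 1 + μ)).prod := by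
    rw [hpm, Polynomial.eval_multiset_prod, Multiset.map_map]
    have : (r.map (Polynomial.eval (-1) ∘ fun a => X - C a)) = (r.map fun μ => 1 + μ).map Neg.neg := by
      rw [Multiset.map_map]
      apply Multiset.map_congr rfl
      intro a _
      simp; ring
    rw [this, Multiset.prod_map_neg, Multiset.card_map, hcard]
  have h4 : (-1 : ℂ) ^ n * (1 + A).det = (-1 : ℂ) ^ n * (r.map (fun μ => 1 + μ)).prod := by
    rw [← h3, heval, hneg, Matrix.det_neg, Fintype.card_fin]
  exact mul_left_cancel₀ (pow_ne_zero n (by norm_num)) h4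


/-- **Theorem.** If all eigenvalues of the `n × n` complex matrix `A` (`n ≥ 1`)
are real and `> -1`, with spectral radius `ρ` and smallest eigenvalue `λ_min`,
then `det (I + A)` is a positive real, `trace A` is real, and
`exp(trace A - n ρ²/(1+λ_min)) ≤ det (I + A) ≤ exp(trace A)`. -/
theorem stmt1 {n : ℕ} (hn : 1 ≤ n) (A : Matrix (Fin n) (Fin n) ℂ)
    (heig : ∀ μ ∈ A.charpoly.roots, μ.im = 0 ∧ -1 < μ.re)
    (ρ : ℝ)
    (hρub : ∀ μ ∈ A.charpoly.roots, ‖μ‖ ≤ ρ)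
    (hρmax : ∃ μ ∈ A.charpoly.roots, ‖μ‖ = ρ)
    (lmin : ℝ)
    (hlb : ∀ μ ∈ A.charpoly.roots, lmin ≤ μ.re)
    (hlmin : ∃ μ ∈ A.charpoly.roots, μ.re = lmin) :
    ((1 + A).det).im = 0 ∧ 0 < ((1 + A).det).re ∧
      (A.trace).im = 0 ∧
      Real.exp (A.trace.re - (n : ℝ) * ρ ^ 2 / (1 + lmin)) ≤ ((1 + A).det).re ∧
      ((1 + A).det).re ≤ Real.exp (A.trace.re) := by
  have hsp : A.charpoly.Splits := IsAlgClosed.splits A.charpoly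
  set s := A.charpoly.roots with hs
  have hcard : Multiset.card s = n := by
    rw [hs, (Polynomial.splits_iff_card_roots).mp hsp, Matrix.charpoly_natDegree_eq_dim,
      Fintype.card_fin]
  set t : Multiset ℝ := s.map Complex.re with ht
  have hcardt : Multiset.card t = n := by rw [ht, Multiset.card_map, hcard]
  -- determinant is real
  have hdet : (1 + A).det = (((t.map (fun x => 1 + x)).prod : ℝ) : ℂ) := by
    rw [det_one_add]
    have hmapeq : s.map (fun μ => 1 + μ)
        = (t.map (fun x => 1 + x)).map (Complex.ofRealHom) := by
      rw [ht, Multiset.map_map, Multiset.map_map]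
      apply Multiset.map_congr rfl
      intro μ hμ
      have h := (heig μ hμ).1
      apply Complex.ext <;> simp [h]
    rw [hmapeq, Multiset.prod_hom _ Complex.ofRealHom]
    rfl
  -- trace is real
  have htr : A.trace = ((t.sum : ℝ) : ℂ) := by
    rw [Matrix.trace_eq_sum_roots_charpoly, ← hs]
    have hmapeq : s = t.map (Complex.ofRealHom) := by
      rw [ht, Multiset.map_map]
      symm
      rw [show (Complex.ofRealHom ∘ Complex.re : ℂ → ℂ) = fun μ => ((μ.re : ℝ) : ℂ) from rfl]
      calc Multiset.map (fun μ => ((μ.re : ℝ) : ℂ)) s = Multiset.map id s := by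
            apply Multiset.map_congr rfl
            intro μ hμ
            have h := (heig μ hμ).1
            apply Complex.ext <;> simp [h]
        _ = s := Multiset.map_id s
    rw [hmapeq, Multiset.sum_hom _ Complex.ofRealHom]
    rfl
  set P : ℝ := (t.map (fun x => 1 + x)).prod with hP
  have hdet_im : ((1 + A).det).im = 0 := by rw [hdet]; exact Complex.ofReal_im _
  have hdet_re : ((1 + A).det).re = P := by rw [hdet]; exact Complex.ofReal_re _
  have htr_im : (A.trace).im = 0 := by rw [htr]; exact Complex.ofReal_im _
  have htr_re : (A.trace).re = t.sum := by rw [htr]; exact Complex.ofReal_re _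
  -- facts about elements of t
  have hmem : ∀ x ∈ t, -1 < x ∧ |x| ≤ ρ ∧ lmin ≤ x := by
    intro x hx
    obtain ⟨μ, hμ, rfl⟩ := Multiset.mem_map.mp hx
    obtain ⟨him, hgt⟩ := heig μ hμ
    have habs : ‖μ‖ = |μ.re| := by
      have : μ = ((μ.re : ℝ) : ℂ) := by apply Complex.ext <;> simp [him]
      rw [this, Complex.norm_real]
      simp
    exact ⟨hgt, habs ▸ hρub μ hμ, hlb μ hμ⟩
  have hlminlt : -1 < lmin := by
    obtain ⟨μ, hμ, hre⟩ := hlmin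
    have := (heig μ hμ).2
    linarith
  -- positivity of P
  have hPpos : 0 < P := by
    apply mprod_pos
    intro y hy
    obtain ⟨x, hx, rfl⟩ := Multiset.mem_map.mp hy
    linarith [(hmem x hx).1]
  -- upper bound
  have hupper : P ≤ Real.exp t.sum := by
    rw [← msum_exp]
    apply mprod_le
    · intro x hx; linarith [(hmem x hx).1]
    · intro x hx; linarith [Real.add_one_le_exp x]
  -- lower bound
  set c : ℝ := ρ ^ 2 / (1 + lmin) with hc
  have hlower : Real.exp (t.sum - (n : ℝ) * c) ≤ P := by
    have h1 : t.sum - (n : ℝ) * c = (t.map (fun x => x - c)).sum := by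
      rw [msum_sub, hcardt]
    rw [h1, ← msum_exp, Multiset.map_map]
    apply mprod_le
    · intro x hx; exact (Real.exp_pos _).le
    · intro x hx
      obtain ⟨hgt, habs, hlx⟩ := hmem x hx
      exact key_ineq x ρ lmin hgt habs hlminlt hlx
  refine ⟨hdet_im, by rw [hdet_re]; exact hPpos, htr_im, ?_, ?_⟩
  · rw [hdet_re, htr_re]
    calc Real.exp (t.sum - (n : ℝ) * ρ ^ 2 / (1 + lmin))
        = Real.exp (t.sum - (n : ℝ) * c) := by rw [hc]; ring_nf
      _ ≤ P := hlower
  · rw [hdet_re, htr_re]; exact hupper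
end

section
/- Let n = k·s and let M be an n×n Hermitian positive-definite complex matrix that is block tridiagonal with respect to the partition of {1,…,n} into k consecutive blocks of equal size s; that is, M_{ij} = 0 whenever the block indices of i and j differ by more than 1. Let M_D be the pinching of M with respect to this partition and M_off = M − M_D. Then the spectral radius satisfies ρ(M_D⁻¹ M_off) < 1. -/
open Matrix
open scoped ComplexOrder

/-- The pinching (block diagonal part) of `M` with respect to the partition of
`{0,…,k*s-1}` into `k` consecutive blocks of equal size `s`
(block index of `i` is `i / s`). -/
def pinchBlocks {k s : ℕ} (M : Matrix (Fin (k * s)) (Fin (k * s)) ℂ) :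
    Matrix (Fin (k * s)) (Fin (k * s)) ℂ :=
  fun i j => if (i : ℕ) / s = (j : ℕ) / s then M i j else 0

/-- A root of the characteristic polynomial is an eigenvalue. -/
lemma eig_of_root {n : ℕ} (A : Matrix (Fin n) (Fin n) ℂ) {μ : ℂ}
    (h : μ ∈ A.charpoly.roots) : ∃ x : Fin n → ℂ, x ≠ 0 ∧ A.mulVec x = μ • x := by
  have hr : A.charpoly.IsRoot μ := (Polynomial.mem_roots'.1 h).2
  have hdet : (μ • (1 : Matrix (Fin n) (Fin n) ℂ) - A).det = 0 := by
    have h2 : (RingHom.mapMatrix (Polynomial.evalRingHom μ)) A.charmatrix =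
        μ • (1 : Matrix (Fin n) (Fin n) ℂ) - A := by
      ext i j
      by_cases hij : i = j <;>
        simp [Matrix.charmatrix_apply, RingHom.mapMatrix_apply, Matrix.map_apply, hij,
          Matrix.one_apply, Matrix.smul_apply, Matrix.diagonal_apply]
    rw [← h2, ← RingHom.map_det]
    simpa [Matrix.charpoly] using hr
  obtain ⟨x, hx0, hx⟩ := (Matrix.exists_mulVec_eq_zero_iff).2 hdet
  refine ⟨x, hx0, ?_⟩
  have := sub_eq_zero.2 hx.symm
  rw [Matrix.sub_mulVec] at hx
  have h1 : (μ • (1 : Matrix (Fin n) (Fin n) ℂ)).mulVec x = μ • x := by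
    simp [Matrix.smul_mulVec]
  rw [h1] at hx
  linear_combination (norm := module) -hx

/-- Quadratic form of the pinching equals a sum of block quadratic forms. -/
lemma pinch_quad {k s : ℕ} (hs : 0 < s) (M : Matrix (Fin (k * s)) (Fin (k * s)) ℂ)
    (x : Fin (k * s) → ℂ) :
    star x ⬝ᵥ (pinchBlocks M).mulVec x =
      ∑ t ∈ Finset.range k,
        star (fun i : Fin (k * s) => if (i : ℕ) / s = t then x i else 0) ⬝ᵥ
          M.mulVec (fun i : Fin (k * s) => if (i : ℕ) / s = t then x i else 0) := by
  simp only [dotProduct, mulVec, pinchBlocks, Pi.star_apply, Finset.mul_sum]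
  conv_rhs => rw [Finset.sum_comm]
  refine Finset.sum_congr rfl fun i _ => ?_
  have hik : (i : ℕ) / s ∈ Finset.range k :=
    Finset.mem_range.2 (Nat.div_lt_of_lt_mul (lt_of_lt_of_eq i.isLt (Nat.mul_comm k s)))
  rw [Finset.sum_eq_single_of_mem _ hik]
  · refine Finset.sum_congr rfl fun j _ => ?_
    by_cases h : (i : ℕ) / s = (j : ℕ) / s
    · simp [h]
    · simp [h, Ne.symm h]
  · intro t _ ht
    refine Finset.sum_eq_zero fun j _ => ?_
    simp [Ne.symm ht]

/-- The pinching of a positive definite matrix is positive definite. -/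
lemma pinch_posDef {k s : ℕ} (hs : 0 < s) {M : Matrix (Fin (k * s)) (Fin (k * s)) ℂ}
    (hM : M.PosDef) : (pinchBlocks M).PosDef := by
  refine posDef_iff_dotProduct_mulVec.mpr ⟨?_, ?_⟩
  · ext i j
    simp only [conjTranspose_apply, pinchBlocks]
    by_cases h : (i : ℕ) / s = (j : ℕ) / s
    · rw [if_pos h.symm, if_pos h, ← Matrix.conjTranspose_apply, hM.isHermitian.eq]
    · rw [if_neg (Ne.symm h), if_neg h, star_zero]
  · intro x hx
    rw [pinch_quad hs M x]
    obtain ⟨i0, hi0⟩ : ∃ i, x i ≠ 0 := by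
      by_contra h
      push_neg at h
      exact hx (funext h)
    have hik : (i0 : ℕ) / s ∈ Finset.range k :=
      Finset.mem_range.2 (Nat.div_lt_of_lt_mul (lt_of_lt_of_eq i0.isLt (Nat.mul_comm k s)))
    refine Finset.sum_pos' (fun t _ => ?_) ⟨(i0 : ℕ) / s, hik, ?_⟩
    · exact hM.posSemidef.dotProduct_mulVec_nonneg _
    · refine hM.dotProduct_mulVec_pos fun h => ?_
      have := congrFun h i0
      simp only [if_pos rfl, Pi.zero_apply] at this
      exact hi0 this

/-- **Corollary.** If `M` is an `n × n` Hermitian positive-definite matrix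
(`n = k*s`) that is block tridiagonal with respect to the partition into `k`
consecutive blocks of equal size `s`, and `M_D` is the pinching with respect to
this partition, then the spectral radius of `M_D⁻¹ M_off` is `< 1`. -/
theorem stmt4 {k s : ℕ}
    (M : Matrix (Fin (k * s)) (Fin (k * s)) ℂ)
    (hM : M.PosDef)
    (htridiag : ∀ i j : Fin (k * s),
      ((i : ℕ) / s + 1 < (j : ℕ) / s ∨ (j : ℕ) / s + 1 < (i : ℕ) / s) → M i j = 0)
    (MD Moff : Matrix (Fin (k * s)) (Fin (k * s)) ℂ)
    (hMD : MD = pinchBlocks M) (hMoff : Moff = M - MD)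
    (ρ : ℝ)
    (hρub : ∀ μ ∈ (MD⁻¹ * Moff).charpoly.roots, ‖μ‖ ≤ ρ)
    (hρmax : ∃ μ ∈ (MD⁻¹ * Moff).charpoly.roots, ‖μ‖ = ρ) :
    ρ < 1 := by
  obtain ⟨μ, hμmem, hμρ⟩ := hρmax
  rw [← hμρ]
  obtain ⟨x, hx0, hAx⟩ := eig_of_root _ hμmem
  -- s is positive since a nonzero vector exists
  have hn : k * s ≠ 0 := by
    intro h
    exact hx0 (funext fun i => absurd i.isLt (by omega))
  have hs : 0 < s := Nat.pos_of_ne_zero fun h => hn (by simp [h])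
  have hMDpd : MD.PosDef := hMD ▸ pinch_posDef hs hM
  have hdet : IsUnit MD.det := hMDpd.det_pos.ne'.isUnit
  -- the eigenvector equation
  have h1 : Moff.mulVec x = μ • MD.mulVec x := by
    have hMoffeq : Moff = MD * (MD⁻¹ * Moff) := by
      rw [← mul_assoc, Matrix.mul_nonsing_inv _ hdet, one_mul]
    rw [hMoffeq, ← Matrix.mulVec_mulVec, hAx, Matrix.mulVec_smul]
  set a := star x ⬝ᵥ MD.mulVec x with ha_def
  set b := star x ⬝ᵥ Moff.mulVec x with hb_def
  have hb : b = μ * a := by rw [hb_def, h1, dotProduct_smul, smul_eq_mul]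
  have ha : 0 < a := hMDpd.dotProduct_mulVec_pos hx0
  -- sum: MD + Moff = M
  have hsum : 0 < a + b := by
    have : MD + Moff = M := by rw [hMoff]; abel
    have hq := hM.dotProduct_mulVec_pos hx0
    rwa [← this, Matrix.add_mulVec, dotProduct_add] at hq
  -- difference: MD - Moff is positive definite via sign flip congruence
  have hdiff : 0 < a - b := by
    set d : Fin (k * s) → ℂ := fun i => (-1 : ℂ) ^ ((i : ℕ) / s) with hd_def
    set D : Matrix (Fin (k * s)) (Fin (k * s)) ℂ := Matrix.diagonal d with hD_def
    have hpow : ∀ t : ℕ, ((-1 : ℂ)) ^ t * ((-1 : ℂ)) ^ t = 1 := fun t => by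
      rw [← pow_add]; exact Even.neg_one_pow ⟨t, rfl⟩
    have hDh : Dᴴ = D := by
      have hsd : star d = d := funext fun i => by simp [hd_def, star_pow]
      rw [hD_def, diagonal_conjTranspose, hsd]
    have hcong : D * M * Dᴴ = MD - Moff := by
      rw [hDh]
      ext i j
      rw [hD_def, Matrix.mul_diagonal, Matrix.diagonal_mul, hMoff, hMD]
      simp only [Matrix.sub_apply, pinchBlocks, hd_def]
      by_cases h : (i : ℕ) / s = (j : ℕ) / s
      · rw [if_pos h, h]
        linear_combination (M i j) * hpow ((j : ℕ) / s)
      · simp only [if_neg h]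
        rcases Nat.lt_or_ge ((i : ℕ) / s) ((j : ℕ) / s) with hlt | hge
        · by_cases h2 : (i : ℕ) / s + 1 < (j : ℕ) / s
          · rw [htridiag i j (Or.inl h2)]; ring
          · have he : (j : ℕ) / s = (i : ℕ) / s + 1 := by omega
            rw [he, pow_succ]
            linear_combination (-(M i j)) * hpow ((i : ℕ) / s)
        · by_cases h2 : (j : ℕ) / s + 1 < (i : ℕ) / s
          · rw [htridiag i j (Or.inr h2)]; ring
          · have he : (i : ℕ) / s = (j : ℕ) / s + 1 := by omega
            rw [he, pow_succ]
            linear_combination (-(M i j)) * hpow ((j : ℕ) / s)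
    have hdne : ∀ i : Fin (k * s), d i ≠ 0 := fun i => by
      simp [hd_def]
    have hDpd : (MD - Moff).PosDef := by
      rw [← hcong]
      refine posDef_iff_dotProduct_mulVec.mpr ⟨?_, ?_⟩
      · show (D * M * Dᴴ)ᴴ = D * M * Dᴴ
        simp [Matrix.conjTranspose_mul, hM.isHermitian.eq, Matrix.mul_assoc]
      · intro y hy
        have hy' : Dᴴ *ᵥ y ≠ 0 := by
          intro h0
          apply hy
          funext i
          have h1 := congrFun h0 i
          rw [hDh, hD_def] at h1
          simp only [Matrix.mulVec_diagonal, Pi.zero_apply] at h1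
          exact (mul_eq_zero.1 h1).resolve_left (hdne i)
        have h2 := hM.dotProduct_mulVec_pos hy'
        have h3 : D * M * Dᴴ = (Dᴴ)ᴴ * M * Dᴴ := by
          rw [Matrix.conjTranspose_conjTranspose]
        rw [h3]
        simpa only [star_mulVec, dotProduct_mulVec, vecMul_vecMul] using h2
    have hq := hDpd.dotProduct_mulVec_pos hx0
    rwa [Matrix.sub_mulVec, dotProduct_sub] at hq
  -- extract real parts
  rw [Complex.lt_def] at ha hsum hdiff
  obtain ⟨har, hai⟩ := ha
  obtain ⟨hsr, hsi⟩ := hsum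
  obtain ⟨hdr, hdi⟩ := hdiff
  simp only [Complex.zero_re, Complex.zero_im, Complex.add_re, Complex.add_im,
    Complex.sub_re, Complex.sub_im] at har hai hsr hsi hdr hdi
  have ha0 : a ≠ 0 := by
    intro h
    rw [h] at har
    simp at har
  have hμ : μ = b / a := by rw [hb, mul_div_cancel_right₀ _ ha0]
  have hae : a = (a.re : ℂ) := Complex.ext rfl (by simp [← hai])
  have hbe : b = (b.re : ℂ) := Complex.ext rfl (by simp; linarith)
  rw [hμ, norm_div, hae, hbe, Complex.norm_real, Complex.norm_real, Real.norm_eq_abs, Real.norm_eq_abs,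
    abs_of_pos har]
  rw [div_lt_one har]
  exact abs_lt.2 ⟨by linarith, by linarith⟩
end
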